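/- arXiv:2209.03930 — 6 statements merged into one kernel-verified Lean document; each statement's English description precedes it below -/
import Mathlib

section
/- For any graphs G and H, if ℓ_G = γ_P(G) and ℓ_H = γ_P(H), then γ_P(G) · γ_P(H) ≤ γ_P(G □ H). -/
open SimpleGraph

/-- The set of vertices eventually observed in the power domination process started
from `S`: first the closed neighborhood of `S` is observed (domination step), then
repeatedly any vertex that is the unique unobserved neighbor of an observed vertex
becomes observed (propagation step). -/
inductive PDObserved {V : Type*} (G : SimpleGraph V) (S : Set V) : V → Prop
  | init (v : V) (hv : v ∈ S) : PDObserved G S v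
  | dom (u v : V) (hu : u ∈ S) (h : G.Adj u v) : PDObserved G S v
  | force (u v : V) (hu : PDObserved G S u) (h : G.Adj u v)
      (hall : ∀ w, G.Adj u w → w ≠ v → PDObserved G S w) : PDObserved G S v

/-- `S` is a power dominating set of `G` if every vertex is eventually observed. -/
def IsPowerDominatingSet {V : Type*} (G : SimpleGraph V) (S : Set V) : Prop :=
  ∀ v, PDObserved G S v

/-- The power domination number: the minimum cardinality of a power dominating set. -/
noncomputable def powerDominationNumber {V : Type*} (G : SimpleGraph V) : ℕ :=
  sInf {n | ∃ S : Set V, S.ncard = n ∧ IsPowerDominatingSet G S}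

/-- A family `π` indexed by a type with at least two elements is a failed power
dominating partition of `G` if it is a partition of `V(G)` into nonempty parts and
for each part `π i`, the complement `V(G) - π i` is not a power dominating set. -/
def IsFailedPDPartition {V : Type*} (G : SimpleGraph V) {ι : Type*} (π : ι → Set V) : Prop :=
  2 ≤ Nat.card ι ∧ (∀ i, (π i).Nonempty) ∧ Pairwise (Function.onFun Disjoint π) ∧
    (⋃ i, π i) = Set.univ ∧ ∀ i, ¬ IsPowerDominatingSet G ((π i)ᶜ)

/-- `ℓ_G`: the maximum `k` such that `G` has a failed power dominating partition into
`k` parts, or `1` if no failed power dominating partition exists. -/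
noncomputable def ellPD {V : Type*} (G : SimpleGraph V) : ℕ :=
  sSup ({1} ∪ {k | ∃ π : Fin k → Set V, IsFailedPDPartition G π})

lemma PDObserved.mono {V : Type*} {G : SimpleGraph V} {S T : Set V} (hST : S ⊆ T) {v : V}
    (h : PDObserved G S v) : PDObserved G T v := by
  induction h with
  | init v hv => exact .init v (hST hv)
  | dom u v hu h => exact .dom u v (hST hu) h
  | force u v hu h hall ihu ihall => exact .force u v ihu h ihall

lemma not_PDObserved_empty {V : Type*} {G : SimpleGraph V} {v : V} :
    ¬ PDObserved G (∅ : Set V) v := by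
  intro h
  induction h with
  | init v hv => exact hv
  | dom u v hu h => exact hu
  | force u v hu h hall ihu ihall => exact ihu

lemma pd_set_nonempty {V : Type*} (G : SimpleGraph V) :
    {n | ∃ S : Set V, S.ncard = n ∧ IsPowerDominatingSet G S}.Nonempty :=
  ⟨(Set.univ : Set V).ncard, Set.univ, rfl, fun v => .init v trivial⟩

lemma pd_le_ncard {V : Type*} {G : SimpleGraph V} {S : Set V}
    (hS : IsPowerDominatingSet G S) : powerDominationNumber G ≤ S.ncard :=
  Nat.sInf_le ⟨S, rfl, hS⟩

lemma exists_min_pd {V : Type*} (G : SimpleGraph V) :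
    ∃ S : Set V, S.ncard = powerDominationNumber G ∧ IsPowerDominatingSet G S :=
  Nat.sInf_mem (pd_set_nonempty G)

lemma isEmpty_of_pd_zero {V : Type*} [Fintype V] {G : SimpleGraph V}
    (h : powerDominationNumber G = 0) : IsEmpty V := by
  obtain ⟨S, hcard, hS⟩ := exists_min_pd G
  rw [h, Set.ncard_eq_zero (Set.toFinite S)] at hcard
  subst hcard
  exact ⟨fun v => not_PDObserved_empty (hS v)⟩

lemma PDObserved.proj_fst {V W : Type*} {G : SimpleGraph V} {H : SimpleGraph W}
    {S : Set (V × W)} {p : V × W} (h : PDObserved (G □ H) S p) :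
    PDObserved G (Prod.fst '' S) p.1 := by
  induction h with
  | init v hv => exact .init _ ⟨v, hv, rfl⟩
  | dom u v hu h =>
    rcases boxProd_adj.mp h with ⟨hadj, _⟩ | ⟨_, heq⟩
    · exact .dom u.1 v.1 ⟨u, hu, rfl⟩ hadj
    · exact heq ▸ .init _ ⟨u, hu, rfl⟩
  | force u v hu h hall ihu ihall =>
    rcases boxProd_adj.mp h with ⟨hadj, heq⟩ | ⟨_, heq⟩
    · refine .force u.1 v.1 ihu hadj fun w hw hne => ?_
      have hadj' : (G □ H).Adj u (w, u.2) := boxProd_adj.mpr (Or.inl ⟨hw, rfl⟩)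
      have hne' : (w, u.2) ≠ v := fun hc => hne (by rw [← hc])
      exact ihall (w, u.2) hadj' hne'
    · exact heq ▸ ihu

lemma PDObserved.proj_snd {V W : Type*} {G : SimpleGraph V} {H : SimpleGraph W}
    {S : Set (V × W)} {p : V × W} (h : PDObserved (G □ H) S p) :
    PDObserved H (Prod.snd '' S) p.2 := by
  induction h with
  | init v hv => exact .init _ ⟨v, hv, rfl⟩
  | dom u v hu h =>
    rcases boxProd_adj.mp h with ⟨_, heq⟩ | ⟨hadj, _⟩
    · exact heq ▸ .init _ ⟨u, hu, rfl⟩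
    · exact .dom u.2 v.2 ⟨u, hu, rfl⟩ hadj
  | force u v hu h hall ihu ihall =>
    rcases boxProd_adj.mp h with ⟨_, heq⟩ | ⟨hadj, heq⟩
    · exact heq ▸ ihu
    · refine .force u.2 v.2 ihu hadj fun w hw hne => ?_
      have hadj' : (G □ H).Adj u (u.1, w) := boxProd_adj.mpr (Or.inr ⟨hw, rfl⟩)
      have hne' : (u.1, w) ≠ v := fun hc => hne (by rw [← hc])
      exact ihall (u.1, w) hadj' hne'

lemma box_not_pd {V W : Type*} {G : SimpleGraph V} {H : SimpleGraph W}
    {A : Set V} {B : Set W}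
    (hA : ¬ IsPowerDominatingSet G Aᶜ) (hB : ¬ IsPowerDominatingSet H Bᶜ) :
    ¬ IsPowerDominatingSet (G □ H) ((A ×ˢ B)ᶜ) := by
  set X : Set V := {v | ¬ PDObserved G Aᶜ v} with hXdef
  set Y : Set W := {w | ¬ PDObserved H Bᶜ w} with hYdef
  obtain ⟨x, hx⟩ : X.Nonempty := by
    by_contra hc
    exact hA fun v => not_not.mp fun hv =>
      hc ⟨v, hv⟩
  obtain ⟨y, hy⟩ : Y.Nonempty := by
    by_contra hc
    exact hB fun v => not_not.mp fun hv =>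
      hc ⟨v, hv⟩
  have hXA : X ⊆ A := fun v hv => by
    by_contra hvA
    exact hv (.init v hvA)
  have hYB : Y ⊆ B := fun v hv => by
    by_contra hvB
    exact hv (.init v hvB)
  have hXnbr : ∀ u v, G.Adj u v → u ∉ A → v ∉ X := fun u v hadj hu hv =>
    hv (.dom u v hu hadj)
  have hYnbr : ∀ u v, H.Adj u v → u ∉ B → v ∉ Y := fun u v hadj hu hv =>
    hv (.dom u v hu hadj)
  have key : ∀ p, PDObserved (G □ H) ((A ×ˢ B)ᶜ) p → p ∉ X ×ˢ Y := by
    intro p hp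
    induction hp with
    | init v hv =>
      intro hc
      exact hv ⟨hXA hc.1, hYB hc.2⟩
    | dom u v hu h =>
      intro hc
      rcases boxProd_adj.mp h with ⟨hadj, heq⟩ | ⟨hadj, heq⟩
      · -- G.Adj u.1 v.1, u.2 = v.2
        by_cases huA : u.1 ∈ A
        · -- then u.2 ∉ B since u ∈ (A ×ˢ B)ᶜ
          have huB : u.2 ∉ B := fun hb => hu ⟨huA, hb⟩
          have : u.2 ∉ Y := fun hy => huB (hYB hy)
          rw [heq] at this
          exact this hc.2
        · exact hXnbr u.1 v.1 hadj huA hc.1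
      · by_cases huB : u.2 ∈ B
        · have huA : u.1 ∉ A := fun ha => hu ⟨ha, huB⟩
          have : u.1 ∉ X := fun hx => huA (hXA hx)
          rw [heq] at this
          exact this hc.1
        · exact hYnbr u.2 v.2 hadj huB hc.2
    | force u v hu h hall ihu ihall =>
      intro hc
      rcases boxProd_adj.mp h with ⟨hadj, heq⟩ | ⟨hadj, heq⟩
      · -- G.Adj u.1 v.1, u.2 = v.2 ∈ Y; so u.1 ∉ X, i.e. u.1 observed in G
        have hu2Y : u.2 ∈ Y := heq ▸ hc.2
        have hu1X : u.1 ∉ X := fun hx => ihu ⟨hx, hu2Y⟩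
        have hu1obs : PDObserved G Aᶜ u.1 := not_not.mp hu1X
        -- v.1 ∈ X unobserved; so u.1 has another unobserved neighbor w
        have : ∃ w, G.Adj u.1 w ∧ w ≠ v.1 ∧ w ∈ X := by
          by_contra hno
          push_neg at hno
          have : PDObserved G Aᶜ v.1 :=
            .force u.1 v.1 hu1obs hadj fun w hw hne => not_not.mp (hno w hw hne)
          exact hc.1 this
        obtain ⟨w, hw, hne, hwX⟩ := this
        have hadj' : (G □ H).Adj u (w, u.2) := boxProd_adj.mpr (Or.inl ⟨hw, rfl⟩)
        have hne' : (w, u.2) ≠ v := fun hcc => hne (by rw [← hcc])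
        exact ihall (w, u.2) hadj' hne' ⟨hwX, hu2Y⟩
      · have hu1X : u.1 ∈ X := heq ▸ hc.1
        have hu2Y : u.2 ∉ Y := fun hy => ihu ⟨hu1X, hy⟩
        have hu2obs : PDObserved H Bᶜ u.2 := not_not.mp hu2Y
        have : ∃ w, H.Adj u.2 w ∧ w ≠ v.2 ∧ w ∈ Y := by
          by_contra hno
          push_neg at hno
          have : PDObserved H Bᶜ v.2 :=
            .force u.2 v.2 hu2obs hadj fun w hw hne => not_not.mp (hno w hw hne)
          exact hc.2 this
        obtain ⟨w, hw, hne, hwY⟩ := this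
        have hadj' : (G □ H).Adj u (u.1, w) := boxProd_adj.mpr (Or.inr ⟨hw, rfl⟩)
        have hne' : (u.1, w) ≠ v := fun hcc => hne (by rw [← hcc])
        exact ihall (u.1, w) hadj' hne' ⟨hu1X, hwY⟩
  intro hPD
  exact key (x, y) (hPD (x, y)) ⟨hx, hy⟩

lemma counting {V W : Type*} [Fintype V] [Fintype W] {G : SimpleGraph V} {H : SimpleGraph W}
    {a b : ℕ} (π : Fin a → Set V) (σ : Fin b → Set W)
    (hπd : Pairwise (Function.onFun Disjoint π)) (hσd : Pairwise (Function.onFun Disjoint σ))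
    (hπ : ∀ i, ¬ IsPowerDominatingSet G ((π i)ᶜ))
    (hσ : ∀ j, ¬ IsPowerDominatingSet H ((σ j)ᶜ))
    {S : Set (V × W)} (hS : IsPowerDominatingSet (G □ H) S) :
    a * b ≤ S.ncard := by
  have hmeet : ∀ (i : Fin a) (j : Fin b), (S ∩ (π i ×ˢ σ j)).Nonempty := by
    intro i j
    by_contra hc
    rw [Set.not_nonempty_iff_eq_empty, ← Set.disjoint_iff_inter_eq_empty] at hc
    have hsub : S ⊆ (π i ×ˢ σ j)ᶜ := Set.disjoint_left.mp hc
    exact box_not_pd (hπ i) (hσ j) fun v => (hS v).mono hsub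
  choose f hfS hfmem using fun p : Fin a × Fin b => hmeet p.1 p.2
  have hinj : Function.Injective f := by
    intro p q hpq
    have h1 : (f p).1 ∈ π p.1 ∩ π q.1 := ⟨(hfmem p).1, hpq ▸ (hfmem q).1⟩
    have h2 : (f p).2 ∈ σ p.2 ∩ σ q.2 := ⟨(hfmem p).2, hpq ▸ (hfmem q).2⟩
    have e1 : p.1 = q.1 := by
      by_contra hne
      exact (hπd hne).le_bot h1
    have e2 : p.2 = q.2 := by
      by_contra hne
      exact (hσd hne).le_bot h2
    exact Prod.ext e1 e2
  have hinj' : Function.Injective (fun p : Fin a × Fin b => (⟨f p, hfS p⟩ : S)) := by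
    intro p q hpq
    exact hinj (congrArg Subtype.val hpq)
  calc a * b = Nat.card (Fin a × Fin b) := by simp
    _ ≤ Nat.card S := Nat.card_le_card_of_injective _ hinj'
    _ = S.ncard := Nat.card_coe_set_eq S

lemma ellPD_partition {V : Type*} [Fintype V] (G : SimpleGraph V) (h2 : 2 ≤ ellPD G) :
    ∃ π : Fin (ellPD G) → Set V, IsFailedPDPartition G π := by
  have hbdd : BddAbove ({1} ∪ {k | ∃ π : Fin k → Set V, IsFailedPDPartition G π}) := by
    refine ⟨max 1 (Fintype.card V), ?_⟩
    rintro k (hk | ⟨π, h2', hne, hdisj, -, -⟩)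
    · simp_all
    · refine le_max_of_le_right ?_
      choose g hg using hne
      have hginj : Function.Injective g := by
        intro i j hij
        by_contra hne'
        exact (hdisj hne').le_bot ⟨hg i, hij ▸ hg j⟩
      simpa using Fintype.card_le_of_injective g hginj
  have hmem : ellPD G ∈ ({1} ∪ {k | ∃ π : Fin k → Set V, IsFailedPDPartition G π}) :=
    Nat.sSup_mem ⟨1, Or.inl rfl⟩ hbdd
  rcases hmem with h1 | hm
  · simp only [Set.mem_singleton_iff] at h1
    omega
  · exact hm


/-- For any graphs `G` and `H`, if `ℓ_G = γ_P(G)` and `ℓ_H = γ_P(H)`, then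
`γ_P(G) · γ_P(H) ≤ γ_P(G □ H)`. -/
theorem powerDominationNumber_mul_le_boxProd_of_ellPD_eq {V W : Type*} [Fintype V] [Fintype W]
    (G : SimpleGraph V) (H : SimpleGraph W)
    (hG : ellPD G = powerDominationNumber G) (hH : ellPD H = powerDominationNumber H) :
    powerDominationNumber G * powerDominationNumber H ≤ powerDominationNumber (G □ H) := by
  set a := powerDominationNumber G with ha
  set b := powerDominationNumber H with hb
  rcases Nat.eq_zero_or_pos a with ha0 | hapos
  · rw [ha0, zero_mul]; exact Nat.zero_le _
  rcases Nat.eq_zero_or_pos b with hb0 | hbpos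
  · rw [hb0, mul_zero]; exact Nat.zero_le _
  have hVne : Nonempty V := by
    by_contra h
    have hemp : IsEmpty V := not_nonempty_iff.mp h
    have h0 : a ≤ 0 := by
      have := pd_le_ncard (G := G) (S := ∅) (fun v => (hemp.false v).elim)
      simpa using this
    omega
  have hWne : Nonempty W := by
    by_contra h
    have hemp : IsEmpty W := not_nonempty_iff.mp h
    have h0 : b ≤ 0 := by
      have := pd_le_ncard (G := H) (S := ∅) (fun v => (hemp.false v).elim)
      simpa using this
    omega
  obtain ⟨S, hScard, hSpd⟩ := exists_min_pd (G □ H)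
  rcases Nat.lt_or_ge a 2 with ha1 | ha2
  · -- a = 1
    have ha1 : a = 1 := by omega
    have hpd : IsPowerDominatingSet H (Prod.snd '' S) := by
      intro w
      obtain ⟨v⟩ := hVne
      exact (hSpd (v, w)).proj_snd
    have h1 : b ≤ (Prod.snd '' S).ncard := pd_le_ncard hpd
    have h2 : (Prod.snd '' S).ncard ≤ S.ncard := Set.ncard_image_le (Set.toFinite S)
    rw [ha1, one_mul, ← hScard]
    omega
  rcases Nat.lt_or_ge b 2 with hb1 | hb2
  · have hb1 : b = 1 := by omega
    have hpd : IsPowerDominatingSet G (Prod.fst '' S) := by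
      intro v
      obtain ⟨w⟩ := hWne
      exact (hSpd (v, w)).proj_fst
    have h1 : a ≤ (Prod.fst '' S).ncard := pd_le_ncard hpd
    have h2 : (Prod.fst '' S).ncard ≤ S.ncard := Set.ncard_image_le (Set.toFinite S)
    rw [hb1, mul_one, ← hScard]
    omega
  · obtain ⟨π, -, -, hπd, -, hπf⟩ := ellPD_partition G (by omega)
    obtain ⟨σ, -, -, hσd, -, hσf⟩ := ellPD_partition H (by omega)
    have hcount := counting π σ hπd hσd hπf hσf hSpd
    rw [hG, hH] at hcount
    rw [← hScard]
    exact hcount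
end

section
/- Let G and H be graphs, let Π = Π_1 ∪ ⋯ ∪ Π_p be a failed power dominating partition of G, and let Σ = Σ_1 ∪ ⋯ ∪ Σ_q be a failed power dominating partition of H. Then the collection {Π_i × Σ_j : 1 ≤ i ≤ p, 1 ≤ j ≤ q} is a failed power dominating partition of G □ H; in particular, for each i and j, no vertex of U_i × V_j is power dominated by V(G □ H) − (Π_i × Σ_j), where U_i is the set of vertices of Π_i not power dominated by V(G) − Π_i and V_j is the set of vertices of Σ_j not power dominated by V(H) − Σ_j. -/
open SimpleGraph

lemma pdObserved_boxProd_or {V W : Type*} (G : SimpleGraph V) (H : SimpleGraph W)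
    (S : Set V) (T : Set W) {x : V × W}
    (h : PDObserved (G □ H) ((S ×ˢ T)ᶜ) x) :
    PDObserved G Sᶜ x.1 ∨ PDObserved H Tᶜ x.2 := by
  induction h with
  | init v hv =>
    rw [Set.mem_compl_iff, Set.mem_prod, not_and_or] at hv
    rcases hv with h1 | h1
    · exact Or.inl (.init _ h1)
    · exact Or.inr (.init _ h1)
  | dom u v hu h =>
    rw [Set.mem_compl_iff, Set.mem_prod, not_and_or] at hu
    rw [boxProd_adj] at h
    rcases h with ⟨hadj, heq⟩ | ⟨hadj, heq⟩
    · rcases hu with h1 | h1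
      · exact Or.inl (.dom u.1 v.1 h1 hadj)
      · exact Or.inr (heq ▸ PDObserved.init u.2 h1)
    · rcases hu with h1 | h1
      · exact Or.inl (heq ▸ PDObserved.init u.1 h1)
      · exact Or.inr (.dom u.2 v.2 h1 hadj)
  | force u v hu h hall ih ihall =>
    rw [boxProd_adj] at h
    rcases h with ⟨hadj, heq⟩ | ⟨hadj, heq⟩
    · by_cases hq : PDObserved H Tᶜ u.2
      · exact Or.inr (heq ▸ hq)
      · have hp : PDObserved G Sᶜ u.1 := ih.resolve_right hq
        refine Or.inl (.force u.1 v.1 hp hadj ?_)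
        intro w hw hne
        have hadj' : (G □ H).Adj u (w, u.2) := by
          rw [boxProd_adj]; exact Or.inl ⟨hw, rfl⟩
        have hne' : (w, u.2) ≠ v := fun he => hne (congrArg Prod.fst he)
        exact (ihall (w, u.2) hadj' hne').resolve_right hq
    · by_cases hp : PDObserved G Sᶜ u.1
      · exact Or.inl (heq ▸ hp)
      · have hq : PDObserved H Tᶜ u.2 := ih.resolve_left hp
        refine Or.inr (.force u.2 v.2 hq hadj ?_)
        intro w hw hne
        have hadj' : (G □ H).Adj u (u.1, w) := by
          rw [boxProd_adj]; exact Or.inr ⟨hw, rfl⟩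
        have hne' : (u.1, w) ≠ v := fun he => hne (congrArg Prod.snd he)
        exact (ihall (u.1, w) hadj' hne').resolve_left hp

/-- If `Π = Π_1 ∪ ⋯ ∪ Π_p` is a failed power dominating partition of `G`
and `Σ = Σ_1 ∪ ⋯ ∪ Σ_q` is a failed power dominating partition of `H`, then the
collection `{Π_i × Σ_j : 1 ≤ i ≤ p, 1 ≤ j ≤ q}` is a failed power dominating partition
of `G □ H`; in particular, for each `i` and `j`, no vertex of `U_i × V_j` is power
dominated by `V(G □ H) − (Π_i × Σ_j)`, where `U_i` is the set of vertices of `Π_i` not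
power dominated by `V(G) − Π_i` and `V_j` is the set of vertices of `Σ_j` not power
dominated by `V(H) − Σ_j`. -/
theorem isFailedPDPartition_boxProd {V W : Type*} [Fintype V] [Fintype W]
    (G : SimpleGraph V) (H : SimpleGraph W) {p q : ℕ}
    (π : Fin p → Set V) (σ : Fin q → Set W)
    (hπ : IsFailedPDPartition G π) (hσ : IsFailedPDPartition H σ) :
    IsFailedPDPartition (G □ H) (fun ij : Fin p × Fin q => π ij.1 ×ˢ σ ij.2) ∧
    ∀ (i : Fin p) (j : Fin q) (u : V) (v : W),
      u ∈ π i → ¬ PDObserved G ((π i)ᶜ) u →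
      v ∈ σ j → ¬ PDObserved H ((σ j)ᶜ) v →
      ¬ PDObserved (G □ H) ((π i ×ˢ σ j)ᶜ) (u, v) := by
  obtain ⟨hp2, hπne, hπdisj, hπun, hπfail⟩ := hπ
  obtain ⟨hq2, hσne, hσdisj, hσun, hσfail⟩ := hσ
  have key : ∀ (i : Fin p) (j : Fin q) (u : V) (v : W),
      ¬ PDObserved G ((π i)ᶜ) u → ¬ PDObserved H ((σ j)ᶜ) v →
      ¬ PDObserved (G □ H) ((π i ×ˢ σ j)ᶜ) (u, v) := by
    intro i j u v hu hv h
    rcases pdObserved_boxProd_or G H (π i) (σ j) h with h1 | h1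
    · exact hu h1
    · exact hv h1
  refine ⟨⟨?_, ?_, ?_, ?_, ?_⟩, fun i j u v _ hu _ hv => key i j u v hu hv⟩
  · simp only [Nat.card_prod, Nat.card_eq_fintype_card, Fintype.card_fin,
      Fintype.card_prod] at *
    calc 2 ≤ p := hp2
    _ ≤ p * q := Nat.le_mul_of_pos_right p (by omega)
  · exact fun ij => (hπne ij.1).prod (hσne ij.2)
  · intro ij ij' hne
    have : ij.1 ≠ ij'.1 ∨ ij.2 ≠ ij'.2 := by
      by_contra hc; push_neg at hc
      exact hne (Prod.ext hc.1 hc.2)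
    rcases this with h1 | h1
    · rw [Function.onFun, Set.disjoint_left]
      rintro ⟨a, b⟩ ⟨ha, _⟩ ⟨ha', _⟩
      exact Set.disjoint_left.mp (hπdisj h1) ha ha'
    · rw [Function.onFun, Set.disjoint_left]
      rintro ⟨a, b⟩ ⟨_, hb⟩ ⟨_, hb'⟩
      exact Set.disjoint_left.mp (hσdisj h1) hb hb'
  · ext ⟨a, b⟩
    simp only [Set.mem_iUnion, Set.mem_univ, iff_true]
    have ha : a ∈ ⋃ i, π i := hπun ▸ Set.mem_univ a
    have hb : b ∈ ⋃ j, σ j := hσun ▸ Set.mem_univ b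
    obtain ⟨i, hi⟩ := Set.mem_iUnion.mp ha
    obtain ⟨j, hj⟩ := Set.mem_iUnion.mp hb
    exact ⟨(i, j), hi, hj⟩
  · rintro ⟨i, j⟩ hpd
    obtain ⟨u, hu⟩ := not_forall.mp (hπfail i)
    obtain ⟨v, hv⟩ := not_forall.mp (hσfail j)
    exact key i j u v hu hv (hpd (u, v))
end

section
/- Let G be a graph, let C be a cut-set of G, write G − C = H_1 ∪ ⋯ ∪ H_m where each H_i is a connected component of G − C, and for each i let K_i be the subgraph of G induced by V(H_i) ∪ C. Then ∑_{i=1}^m γ_P(K_i) − (m−1)·|C| ≤ γ_P(G). -/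
open SimpleGraph

section Aux

variable {V : Type*} (G : SimpleGraph V) (S : Set V)

/-- The set of vertices observed after `n` propagation rounds. -/
def obsAt : ℕ → Set V
  | 0 => S ∪ {v | ∃ u ∈ S, G.Adj u v}
  | n + 1 => obsAt n ∪
      {v | ∃ u ∈ obsAt n, G.Adj u v ∧ ∀ w, G.Adj u w → w ≠ v → w ∈ obsAt n}

lemma obsAt_mono : Monotone (obsAt G S) :=
  monotone_nat_of_le_succ fun n => by rw [obsAt]; exact Set.subset_union_left

lemma exists_common_bound {α : Type*} (s : Finset α) (p : α → ℕ → Prop)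
    (hmono : ∀ a k n, k ≤ n → p a k → p a n) (h : ∀ a ∈ s, ∃ n, p a n) :
    ∃ N, ∀ a ∈ s, p a N := by
  classical
  induction s using Finset.induction with
  | empty => exact ⟨0, by simp⟩
  | @insert x s hx ih =>
    obtain ⟨N, hN⟩ := ih fun a ha => h a (Finset.mem_insert_of_mem ha)
    obtain ⟨n, hn⟩ := h x (Finset.mem_insert_self x s)
    refine ⟨max N n, ?_⟩
    intro a ha
    rcases Finset.mem_insert.mp ha with rfl | ha
    · exact hmono a n _ (le_max_right _ _) hn
    · exact hmono a N _ (le_max_left _ _) (hN a ha)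

lemma pdObserved_exists_obsAt [Fintype V] {v : V} (h : PDObserved G S v) :
    ∃ n, v ∈ obsAt G S n := by
  classical
  induction h with
  | init v hv => exact ⟨0, Or.inl hv⟩
  | dom u v hu h => exact ⟨0, Or.inr ⟨u, hu, h⟩⟩
  | force u v hu h hall ihu ihall =>
    obtain ⟨n₀, hn₀⟩ := ihu
    obtain ⟨N, hN⟩ := exists_common_bound
      (Finset.univ.filter fun w => G.Adj u w ∧ w ≠ v)
      (fun w n => w ∈ obsAt G S n)
      (fun a k n hkn hk => obsAt_mono G S hkn hk)
      (fun a ha => by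
        have := Finset.mem_filter.mp ha
        exact ihall a this.2.1 this.2.2)
    refine ⟨max n₀ N + 1, Or.inr ⟨u, obsAt_mono G S (le_max_left _ _) hn₀, h, ?_⟩⟩
    intro w hw1 hw2
    exact obsAt_mono G S (le_max_right _ _)
      (hN w (Finset.mem_filter.mpr ⟨Finset.mem_univ w, hw1, hw2⟩))

lemma sum_ncard_of_disjoint {W : Type*} [Fintype W] {m : ℕ} (f : Fin m → Set W)
    (h : Pairwise (Function.onFun Disjoint f)) : ∑ i, (f i).ncard = (⋃ i, f i).ncard := by
  classical
  simp only [Set.ncard_eq_toFinset_card', Set.toFinset_iUnion]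
  refine (Finset.card_biUnion ?_).symm
  intro x _ y _ hxy
  simpa [Finset.disjoint_left, Set.disjoint_left] using h hxy

end Aux
/-- Let `G` be a graph, `C` a cut-set of `G`, and write
`G − C = H_1 ∪ ⋯ ∪ H_m` where each `H_i` is a connected component of `G − C` (given by
the vertex sets `Hs i`: they are nonempty, pairwise disjoint, cover `Cᶜ`, induce
connected subgraphs, and no edge of `G` joins two different parts).  Letting `K_i` be
the subgraph of `G` induced by `V(H_i) ∪ C`, we have
`∑_{i=1}^m γ_P(K_i) − (m−1)·|C| ≤ γ_P(G)`. -/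
theorem cutset_lower_bound {V : Type*} [Fintype V] (G : SimpleGraph V) (C : Set V)
    (m : ℕ) (hm : 2 ≤ m) (Hs : Fin m → Set V)
    (hne : ∀ i, (Hs i).Nonempty)
    (hdisj : Pairwise (Function.onFun Disjoint Hs))
    (hcover : (⋃ i, Hs i) = Cᶜ)
    (hconn : ∀ i, (G.induce (Hs i)).Connected)
    (hsep : ∀ i j, i ≠ j → ∀ u ∈ Hs i, ∀ v ∈ Hs j, ¬ G.Adj u v) :
    (∑ i, powerDominationNumber (G.induce (Hs i ∪ C))) - (m - 1) * C.ncard ≤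
      powerDominationNumber G := by
  classical
  -- a minimum power dominating set
  have hne_set : {n | ∃ S : Set V, S.ncard = n ∧ IsPowerDominatingSet G S}.Nonempty :=
    ⟨_, Set.univ, rfl, fun v => PDObserved.init v (Set.mem_univ v)⟩
  obtain ⟨S, hScard, hSpd⟩ := Nat.sInf_mem hne_set
  have hHsC : ∀ i, Hs i ⊆ Cᶜ := fun i => hcover ▸ Set.subset_iUnion Hs i
  -- component function
  have hcompex : ∀ v : V, ∃ i : Fin m, v ∈ C ∨ v ∈ Hs i := by
    intro v
    by_cases hv : v ∈ C
    · exact ⟨⟨0, by omega⟩, Or.inl hv⟩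
    · obtain ⟨i, hi⟩ := Set.mem_iUnion.mp (show v ∈ ⋃ i, Hs i by rw [hcover]; exact hv)
      exact ⟨i, Or.inr hi⟩
  choose comp hcomp using hcompex
  -- neighbors of a vertex of Hs i lie in Hs i ∪ C
  have hnbr : ∀ i, ∀ v ∈ Hs i, ∀ u, G.Adj u v → u ∈ Hs i ∪ C := by
    intro i v hv u hadj
    by_cases hu : u ∈ C
    · exact Or.inr hu
    · have hu' : u ∈ Hs (comp u) := (hcomp u).resolve_left hu
      by_cases hij : comp u = i
      · exact Or.inl (hij ▸ hu')
      · exact absurd hadj (hsep (comp u) i hij u hu' v hv)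
  -- first observation time
  have hobs : ∀ v, ∃ n, v ∈ obsAt G S n := fun v => pdObserved_exists_obsAt G S (hSpd v)
  set ft : V → ℕ := fun v => Nat.find (hobs v) with hft_def
  have hft_spec : ∀ v, v ∈ obsAt G S (ft v) := fun v => Nat.find_spec (hobs v)
  have hft_min : ∀ v k, v ∈ obsAt G S k → ft v ≤ k := fun v k hk => Nat.find_min' (hobs v) hk
  -- canonical witness of first observation
  have hwitex : ∀ v : V, ∃ u : V, v ∈ S ∨ (G.Adj u v ∧
      ((u ∈ S ∧ ft v = 0) ∨ (∃ k, ft v = k + 1 ∧ u ∈ obsAt G S k ∧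
        ∀ w, G.Adj u w → w ≠ v → w ∈ obsAt G S k))) := by
    intro v
    by_cases hvS : v ∈ S
    · exact ⟨v, Or.inl hvS⟩
    · have hv := hft_spec v
      rcases hn : ft v with _ | k
      · rw [hn] at hv
        simp only [obsAt, Set.mem_union, Set.mem_setOf_eq] at hv
        rcases hv with h | ⟨u, hu, hadj⟩
        · exact absurd h hvS
        · exact ⟨u, Or.inr ⟨hadj, Or.inl ⟨hu, rfl⟩⟩⟩
      · rw [hn] at hv
        simp only [obsAt, Set.mem_union, Set.mem_setOf_eq] at hv
        rcases hv with h | ⟨u, hu, hadj, hall⟩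
        · exact absurd (hft_min v k h) (by omega)
        · exact ⟨u, Or.inr ⟨hadj, Or.inr ⟨k, rfl, hu, hall⟩⟩⟩
  choose wit hwit using hwitex
  -- seed sets for the pieces
  set B : Fin m → Set V := fun i =>
    {v | v ∈ C ∧ v ∉ S ∧ wit v ∉ C ∧ comp (wit v) ≠ i} with hB
  set Sd : Fin m → Set V := fun i => (S ∩ (Hs i ∪ C)) ∪ B i with hSdd
  have hSd_mem : ∀ i v, (v ∈ S ∧ v ∈ Hs i ∪ C) ∨
      (v ∈ C ∧ v ∉ S ∧ wit v ∉ C ∧ comp (wit v) ≠ i) → v ∈ Sd i := by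
    intro i v hv
    rw [hSdd]
    rcases hv with ⟨h1, h2⟩ | h
    · exact Or.inl ⟨h1, h2⟩
    · exact Or.inr h
  have hSdsub : ∀ i, Sd i ⊆ Hs i ∪ C := by
    intro i v hv
    rw [hSdd] at hv
    rcases hv with hv | hv
    · exact hv.2
    · exact Or.inr hv.1
  -- adjacency in the induced graph
  have hadj_ind : ∀ (i : Fin m) (a b : V) (ha : a ∈ Hs i ∪ C) (hb : b ∈ Hs i ∪ C),
      G.Adj a b → (G.induce (Hs i ∪ C)).Adj ⟨a, ha⟩ ⟨b, hb⟩ := by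
    intro i a b ha hb h
    simpa using h
  -- main lemma: everything observed in G is observed in the piece
  have main : ∀ (i : Fin m) (n : ℕ) (v : V) (hv : v ∈ Hs i ∪ C), v ∈ obsAt G S n →
      PDObserved (G.induce (Hs i ∪ C)) {x : ↥(Hs i ∪ C) | ↑x ∈ Sd i} ⟨v, hv⟩ := by
    intro i n
    induction n with
    | zero =>
      intro v hv hv0
      by_cases hvS : v ∈ S
      · exact .init _ (hSd_mem i v (Or.inl ⟨hvS, hv⟩))
      rcases hwit v with h | ⟨hadj, hcase⟩
      · exact absurd h hvS
      have hft0 : ft v = 0 := Nat.le_zero.mp (hft_min v 0 hv0)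
      rcases hcase with ⟨huS, _⟩ | ⟨k, hk, _⟩
      swap
      · omega
      have hv' := hv
      rcases hv' with hvH | hvC
      · -- v in Hs i
        have huM : wit v ∈ Hs i ∪ C := hnbr i v hvH _ hadj
        refine PDObserved.dom (⟨wit v, huM⟩ : ↥(Hs i ∪ C)) (⟨v, hv⟩ : ↥(Hs i ∪ C)) ?_ (hadj_ind i _ _ huM hv hadj)
        exact hSd_mem i _ (Or.inl ⟨huS, huM⟩)
      · -- v in C \ S
        by_cases huC : wit v ∈ C
        · refine PDObserved.dom (⟨wit v, Or.inr huC⟩ : ↥(Hs i ∪ C)) (⟨v, hv⟩ : ↥(Hs i ∪ C)) ?_ (hadj_ind i _ _ (Or.inr huC) hv hadj)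
          exact hSd_mem i _ (Or.inl ⟨huS, Or.inr huC⟩)
        · by_cases hji : comp (wit v) = i
          · have huH : wit v ∈ Hs i := hji ▸ (hcomp (wit v)).resolve_left huC
            refine PDObserved.dom (⟨wit v, Or.inl huH⟩ : ↥(Hs i ∪ C)) (⟨v, hv⟩ : ↥(Hs i ∪ C)) ?_ (hadj_ind i _ _ (Or.inl huH) hv hadj)
            exact hSd_mem i _ (Or.inl ⟨huS, Or.inl huH⟩)
          · exact .init _ (hSd_mem i v (Or.inr ⟨hvC, hvS, huC, hji⟩))
    | succ n ih =>
      intro v hv hv1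
      by_cases hvn : v ∈ obsAt G S n
      · exact ih v hv hvn
      by_cases hvS : v ∈ S
      · exact .init _ (hSd_mem i v (Or.inl ⟨hvS, hv⟩))
      rcases hwit v with h | ⟨hadj, hcase⟩
      · exact absurd h hvS
      have hftn : ft v = n + 1 := by
        have h1 : ft v ≤ n + 1 := hft_min v _ hv1
        have h2 : ¬ ft v ≤ n := fun h => hvn (obsAt_mono G S h (hft_spec v))
        omega
      rcases hcase with ⟨_, hft0⟩ | ⟨k, hk, hu, hall⟩
      · omega
      have hkn : k = n := by omega
      subst hkn
      -- forcing step from u := wit v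
      have hforce : ∀ (huM : wit v ∈ Hs i ∪ C),
          PDObserved (G.induce (Hs i ∪ C)) {x : ↥(Hs i ∪ C) | ↑x ∈ Sd i} ⟨v, hv⟩ := by
        intro huM
        refine .force (⟨wit v, huM⟩ : ↥(Hs i ∪ C)) (⟨v, hv⟩ : ↥(Hs i ∪ C)) (ih _ huM hu) (hadj_ind i _ _ huM hv hadj) ?_
        rintro ⟨w, hwM⟩ hadjw hne'
        have hwv : w ≠ v := fun h => hne' (Subtype.ext h)
        have hadjw' : G.Adj (wit v) w := hadjw
        exact ih w hwM (hall w hadjw' hwv)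
      have hv' := hv
      rcases hv' with hvH | hvC
      · exact hforce (hnbr i v hvH _ hadj)
      · by_cases huC : wit v ∈ C
        · exact hforce (Or.inr huC)
        · by_cases hji : comp (wit v) = i
          · exact hforce (Or.inl (hji ▸ (hcomp (wit v)).resolve_left huC))
          · exact .init _ (hSd_mem i v (Or.inr ⟨hvC, hvS, huC, hji⟩))
  -- each Sd i gives a power dominating set of the piece
  have hpd : ∀ i, powerDominationNumber (G.induce (Hs i ∪ C)) ≤ (Sd i).ncard := by
    intro i
    have hpds : IsPowerDominatingSet (G.induce (Hs i ∪ C)) {x : ↥(Hs i ∪ C) | ↑x ∈ Sd i} := by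
      rintro ⟨v, hv⟩
      exact main i (ft v) v hv (hft_spec v)
    have hcard : ({x : ↥(Hs i ∪ C) | ↑x ∈ Sd i} : Set ↥(Hs i ∪ C)).ncard = (Sd i).ncard := by
      have h1 : (Subtype.val '' {x : ↥(Hs i ∪ C) | ↑x ∈ Sd i}) = Sd i := by
        rw [show {x : ↥(Hs i ∪ C) | ↑x ∈ Sd i} = Subtype.val ⁻¹' Sd i from rfl]
        rw [Set.image_preimage_eq_iff.mpr]
        rw [Subtype.range_coe]
        exact hSdsub i
      have h2 := Set.ncard_image_of_injective {x : ↥(Hs i ∪ C) | ↑x ∈ Sd i}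
        Subtype.val_injective
      rw [h1] at h2
      exact h2.symm
    calc powerDominationNumber (G.induce (Hs i ∪ C)) ≤
        ({x : ↥(Hs i ∪ C) | ↑x ∈ Sd i} : Set ↥(Hs i ∪ C)).ncard :=
          Nat.sInf_le ⟨_, rfl, hpds⟩
      _ = (Sd i).ncard := hcard
  -- counting
  set A : Fin m → Set V := fun j => {v | v ∈ C ∧ v ∉ S ∧ wit v ∉ C ∧ comp (wit v) = j} with hA
  set U : Set V := {v | v ∈ C ∧ v ∉ S ∧ wit v ∉ C} with hU
  have hAU : (⋃ j, A j) = U := by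
    ext v; simp only [Set.mem_iUnion, hA, hU, Set.mem_setOf_eq]
    constructor
    · rintro ⟨j, h1, h2, h3, _⟩; exact ⟨h1, h2, h3⟩
    · rintro ⟨h1, h2, h3⟩; exact ⟨comp (wit v), h1, h2, h3, rfl⟩
  have hAdisj : Pairwise (Function.onFun Disjoint A) := by
    intro x y hxy
    simp only [Function.onFun, Set.disjoint_left, hA, Set.mem_setOf_eq]
    rintro v ⟨_, _, _, h4⟩ ⟨_, _, _, h4'⟩
    exact hxy (h4 ▸ h4')
  have hsumA : ∑ j, (A j).ncard = U.ncard := by rw [sum_ncard_of_disjoint A hAdisj, hAU]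
  have hBeq : ∀ i, B i = U \ A i := by
    intro i; ext v
    simp only [hB, hU, hA, Set.mem_setOf_eq, Set.mem_diff]
    constructor
    · rintro ⟨h1, h2, h3, h4⟩; exact ⟨⟨h1, h2, h3⟩, fun h => h4 h.2.2.2⟩
    · rintro ⟨⟨h1, h2, h3⟩, h4⟩; exact ⟨h1, h2, h3, fun h => h4 ⟨h1, h2, h3, h⟩⟩
  have hAsub : ∀ i, A i ⊆ U := fun i => hAU ▸ Set.subset_iUnion A i
  have hBcard : ∀ i, (B i).ncard + (A i).ncard = U.ncard := by
    intro i
    rw [hBeq i]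
    exact Set.ncard_diff_add_ncard_of_subset (hAsub i) (Set.toFinite U)
  -- sum over the seed sets
  have hSplit : ∀ i, (Sd i).ncard ≤ (S ∩ Hs i).ncard + (S ∩ C).ncard + (B i).ncard := by
    intro i
    have h0 : Sd i = (S ∩ (Hs i ∪ C)) ∪ B i := by rw [hSdd]
    calc (Sd i).ncard ≤ (S ∩ (Hs i ∪ C)).ncard + (B i).ncard := by
          rw [h0]; exact Set.ncard_union_le _ _
      _ ≤ (S ∩ Hs i).ncard + (S ∩ C).ncard + (B i).ncard := by
          rw [Set.inter_union_distrib_left]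
          exact Nat.add_le_add_right (Set.ncard_union_le _ _) _
  -- disjoint pieces of S
  have hSH : ∑ i, (S ∩ Hs i).ncard + (S ∩ C).ncard ≤ S.ncard := by
    have hd : Pairwise (Function.onFun Disjoint fun i => S ∩ Hs i) := by
      intro x y hxy
      exact Set.disjoint_of_subset Set.inter_subset_right Set.inter_subset_right (hdisj hxy)
    rw [sum_ncard_of_disjoint _ hd]
    have h1 : (⋃ i, S ∩ Hs i) = S ∩ Cᶜ := by rw [← Set.inter_iUnion, hcover]
    rw [h1]
    have h2 : Disjoint (S ∩ Cᶜ) (S ∩ C) :=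
      Set.disjoint_of_subset Set.inter_subset_right Set.inter_subset_right
        disjoint_compl_left
    rw [← Set.ncard_union_eq h2 (Set.toFinite _) (Set.toFinite _)]
    exact Set.ncard_le_ncard (by rw [← Set.inter_union_distrib_left]; exact Set.inter_subset_left)
      (Set.toFinite S)
  have hUC : U.ncard + (S ∩ C).ncard ≤ C.ncard := by
    have h2 : Disjoint U (S ∩ C) := by
      rw [Set.disjoint_left]
      rintro v hv hv'
      rw [hU] at hv
      exact hv.2.1 hv'.1
    rw [← Set.ncard_union_eq h2 (Set.toFinite _) (Set.toFinite _)]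
    refine Set.ncard_le_ncard ?_ (Set.toFinite C)
    rintro v (hv | hv)
    · rw [hU] at hv; exact hv.1
    · exact hv.2
  -- putting it together
  have htotal : ∑ i, (Sd i).ncard ≤ S.ncard + (m - 1) * C.ncard := by
    calc ∑ i, (Sd i).ncard ≤ ∑ i, ((S ∩ Hs i).ncard + (S ∩ C).ncard + (B i).ncard) :=
          Finset.sum_le_sum fun i _ => hSplit i
      _ = (∑ i, (S ∩ Hs i).ncard) + m * (S ∩ C).ncard + ∑ i, (B i).ncard := by
          rw [Finset.sum_add_distrib, Finset.sum_add_distrib, Finset.sum_const,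
            Finset.card_univ, Fintype.card_fin, smul_eq_mul]
      _ ≤ S.ncard + (m - 1) * C.ncard := by
          have hBsum : ∑ i, (B i).ncard + U.ncard = m * U.ncard := by
            have h3 : ∑ i, ((B i).ncard + (A i).ncard) = m * U.ncard := by
              simp only [hBcard]
              rw [Finset.sum_const, Finset.card_univ, Fintype.card_fin, smul_eq_mul]
            rw [Finset.sum_add_distrib, hsumA] at h3
            exact h3
          have e1 : (m - 1) * ((S ∩ C).ncard + U.ncard) ≤ (m - 1) * C.ncard :=
            Nat.mul_le_mul_left _ (by omega)
          have e2 : (m - 1) * ((S ∩ C).ncard + U.ncard) + ((S ∩ C).ncard + U.ncard) =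
              m * ((S ∩ C).ncard + U.ncard) := by
            have h4 : m - 1 + 1 = m := by omega
            calc (m - 1) * ((S ∩ C).ncard + U.ncard) + ((S ∩ C).ncard + U.ncard) =
                (m - 1 + 1) * ((S ∩ C).ncard + U.ncard) := by ring
              _ = m * ((S ∩ C).ncard + U.ncard) := by rw [h4]
          have e3 : m * ((S ∩ C).ncard + U.ncard) =
              m * (S ∩ C).ncard + m * U.ncard := by ring
          omega
  have hfin : ∑ i, powerDominationNumber (G.induce (Hs i ∪ C)) ≤
      S.ncard + (m - 1) * C.ncard :=
    le_trans (Finset.sum_le_sum fun i _ => hpd i) htotal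
  have hfin2 : powerDominationNumber G = S.ncard := hScard.symm
  omega
end

section
/- Let G be a graph, let C be a cut-set of G, and write G − C = H_1 ∪ ⋯ ∪ H_m where each H_i is a connected component of G − C. Then γ_P(G) ≤ ∑_{i=1}^m γ_P(H_i) + |C|; indeed, if B_i is a power dominating set of H_i for each i, then C ∪ ⋃_{i=1}^m B_i is a power dominating set of G. -/
open SimpleGraph

lemma pd_lift {V : Type*} (G : SimpleGraph V) (A : Set V) (B : Set A) (S : Set V)
    (hB : Subtype.val '' B ⊆ S)
    (hout : ∀ u : A, ∀ w, G.Adj u w → w ∉ A → PDObserved G S w) :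
    ∀ v : A, PDObserved (G.induce A) B v → PDObserved G S v := by
  intro v hv
  induction hv with
  | init v hv => exact PDObserved.init _ (hB ⟨v, hv, rfl⟩)
  | dom u v hu h => exact PDObserved.dom u.val v.val (hB ⟨u, hu, rfl⟩) h
  | force u v hu h hall ih ihall =>
    refine PDObserved.force u.val v.val ih h ?_
    intro w hw hwv
    by_cases hwA : w ∈ A
    · refine ihall ⟨w, hwA⟩ hw ?_
      intro hc; exact hwv (congrArg Subtype.val hc)
    · exact hout u w hw hwA

lemma ncard_iUnion_le {α : Type*} [Finite α] {ι : Type*} (s : Finset ι) (f : ι → Set α) :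
    (⋃ i ∈ s, f i).ncard ≤ ∑ i ∈ s, (f i).ncard := by
  classical
  induction s using Finset.induction with
  | empty => simp
  | insert _ _ hx ih =>
    rename_i a s
    rw [Finset.set_biUnion_insert, Finset.sum_insert hx]
    exact le_trans (Set.ncard_union_le _ _)
      (Nat.add_le_add_left ih _)


/-- Let `G` be a graph, `C` a cut-set of `G`, and write
`G − C = H_1 ∪ ⋯ ∪ H_m` where each `H_i` is a connected component of `G − C` (given by
the vertex sets `Hs i`).  Then `γ_P(G) ≤ ∑_{i=1}^m γ_P(H_i) + |C|`; indeed, if `B_i` is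
a power dominating set of `H_i` for each `i`, then `C ∪ ⋃_{i=1}^m B_i` is a power
dominating set of `G`. -/
theorem cutset_upper_bound {V : Type*} [Fintype V] (G : SimpleGraph V) (C : Set V)
    (m : ℕ) (hm : 2 ≤ m) (Hs : Fin m → Set V)
    (hne : ∀ i, (Hs i).Nonempty)
    (hdisj : Pairwise (Function.onFun Disjoint Hs))
    (hcover : (⋃ i, Hs i) = Cᶜ)
    (hconn : ∀ i, (G.induce (Hs i)).Connected)
    (hsep : ∀ i j, i ≠ j → ∀ u ∈ Hs i, ∀ v ∈ Hs j, ¬ G.Adj u v) :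
    powerDominationNumber G ≤ (∑ i, powerDominationNumber (G.induce (Hs i))) + C.ncard ∧
    ∀ B : (i : Fin m) → Set (Hs i),
      (∀ i, IsPowerDominatingSet (G.induce (Hs i)) (B i)) →
      IsPowerDominatingSet G (C ∪ ⋃ i, Subtype.val '' B i) := by
  have key : ∀ B : (i : Fin m) → Set (Hs i),
      (∀ i, IsPowerDominatingSet (G.induce (Hs i)) (B i)) →
      IsPowerDominatingSet G (C ∪ ⋃ i, Subtype.val '' B i) := by
    intro B hBpd v
    set S : Set V := C ∪ ⋃ i, Subtype.val '' B i with hS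
    by_cases hvC : v ∈ C
    · exact PDObserved.init v (Or.inl hvC)
    · have hv : v ∈ ⋃ i, Hs i := by rw [hcover]; exact hvC
      obtain ⟨i, hvi⟩ := Set.mem_iUnion.mp hv
      refine pd_lift G (Hs i) (B i) S ?_ ?_ ⟨v, hvi⟩ (hBpd i ⟨v, hvi⟩)
      · intro x ⟨y, hy, hxy⟩
        exact Or.inr (Set.mem_iUnion.mpr ⟨i, ⟨y, hy, hxy⟩⟩)
      · intro u w hw hwA
        have hwC : w ∈ C := by
          by_contra hc
          have : w ∈ ⋃ j, Hs j := by rw [hcover]; exact hc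
          obtain ⟨j, hwj⟩ := Set.mem_iUnion.mp this
          have hij : i ≠ j := by rintro rfl; exact hwA hwj
          exact hsep i j hij u.val u.property w hwj hw
        exact PDObserved.init w (Or.inl hwC)
  refine ⟨?_, key⟩
  -- choose minimal PDS for each induced graph
  have hex : ∀ i, ∃ B : Set (Hs i), B.ncard = powerDominationNumber (G.induce (Hs i)) ∧
      IsPowerDominatingSet (G.induce (Hs i)) B := by
    intro i
    have hne' : {n | ∃ S : Set (Hs i), S.ncard = n ∧ IsPowerDominatingSet (G.induce (Hs i)) S}.Nonempty :=
      ⟨(Set.univ : Set (Hs i)).ncard, Set.univ, rfl, fun v => PDObserved.init v (Set.mem_univ v)⟩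
    obtain ⟨S, hS1, hS2⟩ := Nat.sInf_mem hne'
    exact ⟨S, hS1, hS2⟩
  choose B hBcard hBpd using hex
  have hPDS := key B hBpd
  have hmem : (C ∪ ⋃ i, Subtype.val '' B i).ncard ∈
      {n | ∃ S : Set V, S.ncard = n ∧ IsPowerDominatingSet G S} :=
    ⟨_, rfl, hPDS⟩
  refine le_trans (Nat.sInf_le hmem) ?_
  have h1 : (C ∪ ⋃ i, Subtype.val '' B i).ncard ≤ C.ncard + (⋃ i, Subtype.val '' B i).ncard :=
    Set.ncard_union_le _ _
  have h2 : (⋃ i, Subtype.val '' B i).ncard ≤ ∑ i, (Subtype.val '' B i).ncard := by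
    have := ncard_iUnion_le (Finset.univ : Finset (Fin m)) (fun i => Subtype.val '' B i)
    simpa using this
  have h3 : ∀ i, (Subtype.val '' B i).ncard = powerDominationNumber (G.induce (Hs i)) := by
    intro i
    rw [Set.ncard_image_of_injective _ Subtype.val_injective, hBcard]
  calc (C ∪ ⋃ i, Subtype.val '' B i).ncard
      ≤ C.ncard + (⋃ i, Subtype.val '' B i).ncard := h1
    _ ≤ C.ncard + ∑ i, (Subtype.val '' B i).ncard := Nat.add_le_add_left h2 _
    _ = (∑ i, powerDominationNumber (G.induce (Hs i))) + C.ncard := by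
        rw [Nat.add_comm]; congr 1; exact Finset.sum_congr rfl fun i _ => h3 i
end

section
/- Let G be a graph, let C be a cut-set of G of size s, write G − C = H_1 ∪ ⋯ ∪ H_m where each H_i is a connected component of G − C, and for each i ∈ [m] let C_i be any subset of C and let L_i be the subgraph of G induced by V(H_i) ∪ C_i. Then γ_P(G) ≤ ∑_{i=1}^m γ_P(L_i) + s; indeed, if B_i is a minimum power dominating set of L_i for each i, then C ∪ ⋃_{i=1}^m B_i is a power dominating set of G. -/
open SimpleGraph

lemma ncard_finset_biUnion_le {α ι : Type*} [DecidableEq ι] (t : Finset ι) (f : ι → Set α) :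
    (⋃ i ∈ t, f i).ncard ≤ ∑ i ∈ t, (f i).ncard := by
  induction t using Finset.induction with
  | empty => simp
  | insert _ _ hx ih =>
    rename_i a t'
    rw [Finset.set_biUnion_insert, Finset.sum_insert hx]
    exact le_trans (Set.ncard_union_le _ _) (by omega)

lemma lift_obs {V : Type*} (G : SimpleGraph V) (A : Set V) (S : Set V) (B' : Set ↥A)
    (hB : ∀ x : ↥A, x ∈ B' → (x : V) ∈ S)
    (hbound : ∀ u : ↥A, (u : V) ∉ S → ∀ w : V, G.Adj u w → w ∈ S ∨ w ∈ A) :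
    ∀ v : ↥A, PDObserved (G.induce A) B' v → PDObserved G S (v : V) := by
  intro v h
  induction h with
  | init v hv => exact .init _ (hB v hv)
  | dom u v hu h => exact .dom _ _ (hB u hu) h
  | force u v hu h hall ihu ihall =>
    by_cases hus : (u : V) ∈ S
    · exact .dom _ _ hus h
    · refine .force (u : V) (v : V) ihu h ?_
      intro w hw hwv
      rcases hbound u hus w hw with hwS | hwA
      · exact .init _ hwS
      · exact ihall ⟨w, hwA⟩ hw (fun e => hwv (congrArg Subtype.val e))

/-- Let `G` be a graph, `C` a cut-set of `G` of size `s`, write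
`G − C = H_1 ∪ ⋯ ∪ H_m` where each `H_i` is a connected component of `G − C` (given by
the vertex sets `Hs i`), and for each `i` let `C_i ⊆ C` and let `L_i` be the subgraph
of `G` induced by `V(H_i) ∪ C_i`.  Then `γ_P(G) ≤ ∑_{i=1}^m γ_P(L_i) + s`; indeed, if
`B_i` is a minimum power dominating set of `L_i` for each `i`, then
`C ∪ ⋃_{i=1}^m B_i` is a power dominating set of `G`. -/
theorem cutset_upper_bound_general {V : Type*} [Fintype V] (G : SimpleGraph V)
    (C : Set V) (s : ℕ) (hC : C.ncard = s)
    (m : ℕ) (hm : 2 ≤ m) (Hs : Fin m → Set V)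
    (hne : ∀ i, (Hs i).Nonempty)
    (hdisj : Pairwise (Function.onFun Disjoint Hs))
    (hcover : (⋃ i, Hs i) = Cᶜ)
    (hconn : ∀ i, (G.induce (Hs i)).Connected)
    (hsep : ∀ i j, i ≠ j → ∀ u ∈ Hs i, ∀ v ∈ Hs j, ¬ G.Adj u v)
    (Cs : Fin m → Set V) (hCs : ∀ i, Cs i ⊆ C) :
    powerDominationNumber G ≤
      (∑ i, powerDominationNumber (G.induce (Hs i ∪ Cs i))) + s ∧
    ∀ B : (i : Fin m) → Set (↥(Hs i ∪ Cs i)),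
      (∀ i, IsPowerDominatingSet (G.induce (Hs i ∪ Cs i)) (B i) ∧
        (B i).ncard = powerDominationNumber (G.induce (Hs i ∪ Cs i))) →
      IsPowerDominatingSet G (C ∪ ⋃ i, Subtype.val '' B i) := by
  -- First establish the second part (the PDS claim), then deduce the bound.
  have key : ∀ B : (i : Fin m) → Set (↥(Hs i ∪ Cs i)),
      (∀ i, IsPowerDominatingSet (G.induce (Hs i ∪ Cs i)) (B i)) →
      IsPowerDominatingSet G (C ∪ ⋃ i, Subtype.val '' B i) := by
    intro B hB v
    set S : Set V := C ∪ ⋃ i, Subtype.val '' B i with hS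
    by_cases hvC : v ∈ C
    · exact .init _ (Or.inl hvC)
    · have hv : v ∈ ⋃ i, Hs i := hcover ▸ hvC
      obtain ⟨i, hvi⟩ := Set.mem_iUnion.mp hv
      have hvA : v ∈ Hs i ∪ Cs i := Or.inl hvi
      refine lift_obs G (Hs i ∪ Cs i) S (B i) ?_ ?_ ⟨v, hvA⟩ (hB i ⟨v, hvA⟩)
      · intro x hx
        exact Or.inr (Set.mem_iUnion.mpr ⟨i, Set.mem_image_of_mem _ hx⟩)
      · intro u huS w hw
        have huC : (u : V) ∉ C := fun h => huS (Or.inl h)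
        have huHi : (u : V) ∈ Hs i := by
          rcases u.2 with h | h
          · exact h
          · exact absurd (hCs i h) huC
        by_cases hwC : w ∈ C
        · exact Or.inl (Or.inl hwC)
        · have : w ∈ ⋃ j, Hs j := hcover ▸ hwC
          obtain ⟨j, hwj⟩ := Set.mem_iUnion.mp this
          rcases eq_or_ne j i with rfl | hji
          · exact Or.inr (Or.inl hwj)
          · exact absurd hw (hsep i j hji.symm _ huHi _ hwj)
  constructor
  · -- choose minimum power dominating sets
    have hex : ∀ i : Fin m, ∃ B : Set (↥(Hs i ∪ Cs i)),
        B.ncard = powerDominationNumber (G.induce (Hs i ∪ Cs i)) ∧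
        IsPowerDominatingSet (G.induce (Hs i ∪ Cs i)) B := by
      intro i
      have hne' : {n | ∃ S : Set (↥(Hs i ∪ Cs i)), S.ncard = n ∧
          IsPowerDominatingSet (G.induce (Hs i ∪ Cs i)) S}.Nonempty :=
        ⟨_, Set.univ, rfl, fun v => .init v (Set.mem_univ v)⟩
      exact Nat.sInf_mem hne'
    choose B hBcard hBpds using hex
    set S : Set V := C ∪ ⋃ i, Subtype.val '' B i with hSdef
    have hpds : IsPowerDominatingSet G S := key B hBpds
    have h1 : powerDominationNumber G ≤ S.ncard := Nat.sInf_le ⟨S, rfl, hpds⟩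
    refine le_trans h1 ?_
    have h2 : S.ncard ≤ (⋃ i, Subtype.val '' B i).ncard + C.ncard := by
      rw [hSdef, Set.union_comm]
      exact Set.ncard_union_le _ _
    have h3 : (⋃ i, Subtype.val '' B i).ncard ≤
        ∑ i, powerDominationNumber (G.induce (Hs i ∪ Cs i)) := by
      have : (⋃ i, Subtype.val '' B i) = ⋃ i ∈ (Finset.univ : Finset (Fin m)),
          Subtype.val '' B i := by simp
      rw [this]
      refine le_trans (ncard_finset_biUnion_le _ _) ?_
      refine Finset.sum_le_sum fun i _ => ?_
      rw [Set.ncard_image_of_injective _ Subtype.val_injective, hBcard]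
    omega
  · intro B hB
    exact key B (fun i => (hB i).1)
end

section
/- There exist a graph G, a cut-set C of G of size s, components H_1, …, H_m of G − C, and subsets C_i ⊆ C with induced subgraphs L_i on V(H_i) ∪ C_i, such that ∑_{i=1}^m γ_P(L_i) + s < ∑_{i=1}^m γ_P(H_i) + s. Specifically, for i ∈ [2] let H_i be obtained from two disjoint copies of the star K_{1,n} with n ≥ 3 by adding an edge between their centers, let G be obtained from H_1 ∪ H_2 together with two new vertices x_1, x_2 each adjacent to every vertex of H_1 ∪ H_2, let C = {x_1, x_2}, C_i = {x_i}, and let L_i be the subgraph induced by V(H_i) ∪ {x_i}; then γ_P(L_1) + γ_P(L_2) + 2 = 4 while γ_P(H_1) + γ_P(H_2) + 2 = 6. -/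
open SimpleGraph

/-- The graph obtained from two disjoint copies of the star `K_{1,n}` by adding an edge
between their centers.  The centers are `Sum.inl 0` and `Sum.inl 1`, and the leaves of
the star with center `Sum.inl a` are the vertices `Sum.inr (a, j)`. -/
def doubleStar (n : ℕ) : SimpleGraph (Fin 2 ⊕ (Fin 2 × Fin n)) :=
  SimpleGraph.fromRel (fun p q =>
    (p = Sum.inl 0 ∧ q = Sum.inl 1) ∨
    (∃ a j, p = Sum.inl a ∧ q = Sum.inr (a, j)))

/-- The graph `G` obtained from `H_1 ∪ H_2` (where `H_i` is a copy of `doubleStar n`,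
with vertices `Sum.inl (i, w)`) together with two new vertices `x_1 = Sum.inr 0` and
`x_2 = Sum.inr 1`, each adjacent to every vertex of `H_1 ∪ H_2`. -/
def twoDoubleStarsPlusTwo (n : ℕ) :
    SimpleGraph ((Fin 2 × (Fin 2 ⊕ (Fin 2 × Fin n))) ⊕ Fin 2) :=
  SimpleGraph.fromRel (fun p q =>
    (∃ i w w', p = Sum.inl (i, w) ∧ q = Sum.inl (i, w') ∧ (doubleStar n).Adj w w') ∨
    (∃ x v, p = Sum.inr x ∧ q = Sum.inl v))

lemma observed_subset {V : Type*} (G : SimpleGraph V) (S T : Set V)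
    (hS : S ⊆ T)
    (hdom : ∀ u ∈ S, ∀ v, G.Adj u v → v ∈ T)
    (hforce : ∀ u ∈ T, ∀ v, G.Adj u v → (∀ w, G.Adj u w → w ≠ v → w ∈ T) → v ∈ T) :
    ∀ v, PDObserved G S v → v ∈ T := by
  intro v h
  induction h with
  | init v hv => exact hS hv
  | dom u v hu h => exact hdom u hu v h
  | force u v hu h hall ihu ihall => exact hforce u ihu v h ihall

lemma not_pd_empty {V : Type*} [Nonempty V] (G : SimpleGraph V) :
    ¬ IsPowerDominatingSet G (∅ : Set V) := by
  intro h
  obtain ⟨v⟩ := ‹Nonempty V›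
  have hv := h v
  have := observed_subset G ∅ ∅ (subset_refl _)
    (by rintro u ⟨⟩) (by rintro u ⟨⟩) v hv
  exact this

lemma pdn_le {V : Type*} (G : SimpleGraph V) (S : Set V) (h : IsPowerDominatingSet G S) :
    powerDominationNumber G ≤ S.ncard := Nat.sInf_le ⟨S, rfl, h⟩

lemma pdn_eq_one {V : Type*} [Finite V] (G : SimpleGraph V) (v : V)
    (h : ∀ w, w = v ∨ G.Adj v w) : powerDominationNumber G = 1 := by
  have : Nonempty V := ⟨v⟩
  apply le_antisymm
  · have hpd : IsPowerDominatingSet G {v} := by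
      intro w
      rcases h w with rfl | hadj
      · exact .init w rfl
      · exact .dom v w rfl hadj
    simpa using pdn_le G {v} hpd
  · refine le_csInf ⟨1, {v}, by simp, fun w => ?_⟩ ?_
    · rcases h w with rfl | hadj
      · exact .init w rfl
      · exact .dom v w rfl hadj
    rintro m ⟨S, rfl, hS⟩
    rw [Nat.one_le_iff_ne_zero]
    intro h0
    rw [Set.ncard_eq_zero S.toFinite] at h0
    exact not_pd_empty G (h0 ▸ hS)

lemma pdn_eq_two {V : Type*} [Finite V] [Nonempty V] (G : SimpleGraph V)
    (S : Set V) (h2 : S.ncard = 2) (hpd : IsPowerDominatingSet G S)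
    (h1 : ∀ v : V, ¬ IsPowerDominatingSet G {v}) :
    powerDominationNumber G = 2 := by
  apply le_antisymm
  · simpa [h2] using pdn_le G S hpd
  · refine le_csInf ⟨S.ncard, S, rfl, hpd⟩ ?_
    rintro m ⟨S', rfl, hS'⟩
    by_contra hlt
    push_neg at hlt
    interval_cases h : S'.ncard
    · rw [Set.ncard_eq_zero S'.toFinite] at h
      exact not_pd_empty G (h ▸ hS')
    · rw [Set.ncard_eq_one] at h
      obtain ⟨v, rfl⟩ := h
      exact h1 v hS'


lemma fin2_cases (a : Fin 2) : a = 0 ∨ a = 1 := by omega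

lemma fin2_succ_ne (a : Fin 2) : a + 1 ≠ a := by omega

lemma fin2_ne_iff {a b : Fin 2} : a ≠ b ↔ b = a + 1 := by omega

lemma ds_adj_center {n : ℕ} (a : Fin 2) (v : Fin 2 ⊕ (Fin 2 × Fin n)) :
    (doubleStar n).Adj (Sum.inl a) v ↔ v = Sum.inl (a + 1) ∨ ∃ j, v = Sum.inr (a, j) := by
  constructor
  · rintro ⟨hne, (⟨h1, h2⟩ | ⟨b, j, h1, h2⟩) | (⟨h1, h2⟩ | ⟨b, j, h1, h2⟩)⟩
    · cases Sum.inl.inj h1; exact Or.inl (by rw [h2]; norm_num)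
    · cases Sum.inl.inj h1; exact Or.inr ⟨j, h2⟩
    · cases Sum.inl.inj h2; exact Or.inl (by rw [h1]; simp only [Sum.inl.injEq]; decide)
    · exact absurd h2 (by simp)
  · rintro (rfl | ⟨j, rfl⟩)
    · refine ⟨by simp [fin2_succ_ne], ?_⟩
      rcases fin2_cases a with rfl | rfl
      · exact Or.inl (Or.inl ⟨rfl, rfl⟩)
      · exact Or.inr (Or.inl ⟨by simp only [Sum.inl.injEq]; decide, rfl⟩)
    · exact ⟨by simp, Or.inl (Or.inr ⟨a, j, rfl, rfl⟩)⟩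

lemma ds_adj_leaf {n : ℕ} (a : Fin 2) (j : Fin n) (v : Fin 2 ⊕ (Fin 2 × Fin n)) :
    (doubleStar n).Adj (Sum.inr (a, j)) v ↔ v = Sum.inl a := by
  constructor
  · rintro ⟨hne, (⟨h1, h2⟩ | ⟨b, j', h1, h2⟩) | (⟨h1, h2⟩ | ⟨b, j', h1, h2⟩)⟩
    · exact absurd h1 (by simp)
    · exact absurd h1 (by simp)
    · exact absurd h2 (by simp)
    · obtain ⟨rfl, -⟩ := Prod.mk.injEq .. ▸ Sum.inr.inj h2
      exact h1
  · rintro rfl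
    exact ⟨by simp, Or.inr (Or.inr ⟨a, j, rfl, rfl⟩)⟩

lemma tds_adj_inl_inl {n : ℕ} (i i' : Fin 2) (w w' : Fin 2 ⊕ (Fin 2 × Fin n)) :
    (twoDoubleStarsPlusTwo n).Adj (Sum.inl (i, w)) (Sum.inl (i', w')) ↔
      i = i' ∧ (doubleStar n).Adj w w' := by
  constructor
  · rintro ⟨hne, (⟨a, x, y, h1, h2, h3⟩ | ⟨x, v, h1, -⟩) | (⟨a, x, y, h1, h2, h3⟩ | ⟨x, v, h1, -⟩)⟩
    · obtain ⟨rfl, rfl⟩ := Prod.mk.injEq .. ▸ Sum.inl.inj h1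
      obtain ⟨rfl, rfl⟩ := Prod.mk.injEq .. ▸ Sum.inl.inj h2
      exact ⟨rfl, h3⟩
    · exact absurd h1 (by simp)
    · obtain ⟨rfl, rfl⟩ := Prod.mk.injEq .. ▸ Sum.inl.inj h2
      obtain ⟨rfl, rfl⟩ := Prod.mk.injEq .. ▸ Sum.inl.inj h1
      exact ⟨rfl, h3.symm⟩
    · exact absurd h1 (by simp)
  · rintro ⟨rfl, h⟩
    exact ⟨by simp [h.ne], Or.inl (Or.inl ⟨i, w, w', rfl, rfl, h⟩)⟩

lemma tds_adj_inr_inl {n : ℕ} (x : Fin 2) (v : Fin 2 × (Fin 2 ⊕ (Fin 2 × Fin n))) :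
    (twoDoubleStarsPlusTwo n).Adj (Sum.inr x) (Sum.inl v) :=
  ⟨by simp, Or.inl (Or.inr ⟨x, v, rfl, rfl⟩)⟩

section Hlemmas
variable (n : ℕ) (i : Fin 2)

abbrev Vtds (n : ℕ) := (Fin 2 × (Fin 2 ⊕ (Fin 2 × Fin n))) ⊕ Fin 2

abbrev Hset : Set (Vtds n) := {v | ∃ w, v = Sum.inl (i, w)}

lemma Hg_adj (x y : ↥(Hset n i)) :
    ((twoDoubleStarsPlusTwo n).induce (Hset n i)).Adj x y ↔
      (twoDoubleStarsPlusTwo n).Adj x.val y.val := Iff.rfl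

lemma H_singleton_not_pd (hn : 3 ≤ n)
    (v : ↥(Hset n i)) :
    ¬ IsPowerDominatingSet ((twoDoubleStarsPlusTwo n).induce (Hset n i)) {v} := by
  intro hpd
  obtain ⟨vval, w, rfl⟩ := v
  have hn0 : 0 < n := by omega
  have hn1 : 1 < n := by omega
  cases w with
  | inl a =>
    -- v is a center; the leaves of the other center are never observed
    set T : Set ↥(Hset n i) := {x | x.val = Sum.inl (i, Sum.inl 0) ∨
        x.val = Sum.inl (i, Sum.inl 1) ∨ ∃ j, x.val = Sum.inl (i, Sum.inr (a, j))} with hT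
    have key : ∀ x, PDObserved ((twoDoubleStarsPlusTwo n).induce (Hset n i)) {⟨_, ⟨Sum.inl a, rfl⟩⟩} x → x ∈ T := by
      apply observed_subset
      · rintro x rfl
        rcases fin2_cases a with rfl | rfl
        · exact Or.inl rfl
        · exact Or.inr (Or.inl rfl)
      · rintro u rfl y hadj
        obtain ⟨wy, hwy⟩ := y.2
        rw [Hg_adj, hwy, tds_adj_inl_inl] at hadj
        have := hadj.2
        rw [ds_adj_center] at this
        rcases this with h | ⟨j, h⟩
        · subst h
          rcases fin2_cases (a + 1) with h1 | h1 <;> rw [h1] at hwy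
          · exact Or.inl hwy
          · exact Or.inr (Or.inl hwy)
        · exact Or.inr (Or.inr ⟨j, by rw [hwy, h]⟩)
      · intro u hu y hadj hall
        obtain ⟨wy, hwy⟩ := y.2
        rcases hu with hu | hu | ⟨j, hu⟩
        -- u is center 0 or center 1 or a leaf of center a
        · -- center 0
          rw [Hg_adj, hu, hwy, tds_adj_inl_inl, ds_adj_center] at hadj
          rcases hadj.2 with h | ⟨j, h⟩
          · subst h
            refine Or.inr (Or.inl ?_)
            rw [hwy]
            simp only [Sum.inl.injEq, Prod.mk.injEq]
            exact ⟨trivial, by decide⟩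
          · subst h
            by_cases hba : (0 : Fin 2) = a
            · exact Or.inr (Or.inr ⟨j, by rw [hwy, ← hba]⟩)
            · -- contradiction: center 0 has ≥ 2 unobserved leaf neighbors
              exfalso
              set j' : Fin n := if j.val = 0 then ⟨1, hn1⟩ else ⟨0, hn0⟩ with hj'
              have hjj : j'.val ≠ j.val := by by_cases h0 : (j : ℕ) = 0 <;> simp [hj', h0] <;> omega
              have hz := hall ⟨Sum.inl (i, Sum.inr (0, j')), ⟨_, rfl⟩⟩
                (by rw [Hg_adj, hu, tds_adj_inl_inl, ds_adj_center]
                    exact ⟨rfl, Or.inr ⟨j', rfl⟩⟩)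
                (by intro h; rw [Subtype.ext_iff, hwy] at h; simp at h; exact hjj (by omega))
              rcases hz with h | h | ⟨j'', h⟩ <;> simp at h
              exact hba h.1
        · -- center 1
          rw [Hg_adj, hu, hwy, tds_adj_inl_inl, ds_adj_center] at hadj
          rcases hadj.2 with h | ⟨j, h⟩
          · subst h
            refine Or.inl ?_
            rw [hwy]
            simp only [Sum.inl.injEq, Prod.mk.injEq]
            exact ⟨trivial, by decide⟩
          · subst h
            by_cases hba : (1 : Fin 2) = a
            · exact Or.inr (Or.inr ⟨j, by rw [hwy, ← hba]⟩)
            · exfalso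
              set j' : Fin n := if j.val = 0 then ⟨1, hn1⟩ else ⟨0, hn0⟩ with hj'
              have hjj : j'.val ≠ j.val := by by_cases h0 : (j : ℕ) = 0 <;> simp [hj', h0] <;> omega
              have hz := hall ⟨Sum.inl (i, Sum.inr (1, j')), ⟨_, rfl⟩⟩
                (by rw [Hg_adj, hu, tds_adj_inl_inl, ds_adj_center]
                    exact ⟨rfl, Or.inr ⟨j', rfl⟩⟩)
                (by intro h; rw [Subtype.ext_iff, hwy] at h; simp at h; exact hjj (by omega))
              rcases hz with h | h | ⟨j'', h⟩ <;> simp at h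
              exact hba h.1
        · -- leaf of center a
          rw [Hg_adj, hu, hwy, tds_adj_inl_inl, ds_adj_leaf] at hadj
          have h := hadj.2
          subst h
          rcases fin2_cases a with h1 | h1 <;> rw [h1] at hwy
          · exact Or.inl hwy
          · exact Or.inr (Or.inl hwy)
    -- the target leaf of the other center is unobserved
    have ht := key ⟨Sum.inl (i, Sum.inr (a + 1, ⟨0, hn0⟩)), ⟨_, rfl⟩⟩
      (hpd ⟨Sum.inl (i, Sum.inr (a + 1, ⟨0, hn0⟩)), ⟨_, rfl⟩⟩)
    rcases ht with h | h | ⟨j'', h⟩ <;> simp at h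
  | inr p =>
    obtain ⟨a, j⟩ := p
    -- v is a leaf of center a; the other center is never observed
    set T : Set ↥(Hset n i) := {x | x.val = Sum.inl (i, Sum.inl a) ∨
        x.val = Sum.inl (i, Sum.inr (a, j))} with hT
    have key : ∀ x, PDObserved ((twoDoubleStarsPlusTwo n).induce (Hset n i)) {⟨_, ⟨Sum.inr (a, j), rfl⟩⟩} x → x ∈ T := by
      apply observed_subset
      · rintro x rfl
        exact Or.inr rfl
      · rintro u rfl y hadj
        obtain ⟨wy, hwy⟩ := y.2
        rw [Hg_adj, hwy, tds_adj_inl_inl, ds_adj_leaf] at hadj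
        have h := hadj.2
        subst h
        exact Or.inl hwy
      · intro u hu y hadj hall
        obtain ⟨wy, hwy⟩ := y.2
        rcases hu with hu | hu
        · -- u is center a
          rw [Hg_adj, hu, hwy, tds_adj_inl_inl, ds_adj_center] at hadj
          rcases hadj.2 with h | ⟨j', h⟩
          · -- y is the other center: contradiction using an unobserved leaf of a
            subst h
            exfalso
            set j' : Fin n := if j.val = 0 then ⟨1, hn1⟩ else ⟨0, hn0⟩ with hj'
            have hjj : j'.val ≠ j.val := by by_cases h0 : (j : ℕ) = 0 <;> simp [hj', h0] <;> omega
            have hz := hall ⟨Sum.inl (i, Sum.inr (a, j')), ⟨_, rfl⟩⟩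
              (by rw [Hg_adj, hu, tds_adj_inl_inl, ds_adj_center]
                  exact ⟨rfl, Or.inr ⟨j', rfl⟩⟩)
              (by intro h; rw [Subtype.ext_iff, hwy] at h; simp at h)
            rcases hz with h | h <;> simp at h
            exact hjj (by omega)
          · -- y is a leaf of a
            subst h
            by_cases hjy : j' = j
            · exact Or.inr (by rw [hwy, hjy])
            · -- contradiction using the unobserved other center
              exfalso
              have hz := hall ⟨Sum.inl (i, Sum.inl (a + 1)), ⟨_, rfl⟩⟩
                (by rw [Hg_adj, hu, tds_adj_inl_inl, ds_adj_center]
                    exact ⟨rfl, Or.inl rfl⟩)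
                (by intro h; rw [Subtype.ext_iff, hwy] at h; simp at h)
              rcases hz with h | h <;> simp at h
        · -- u is the leaf (a, j)
          rw [Hg_adj, hu, hwy, tds_adj_inl_inl, ds_adj_leaf] at hadj
          have h := hadj.2
          subst h
          exact Or.inl hwy
    have ht := key ⟨Sum.inl (i, Sum.inl (a + 1)), ⟨_, rfl⟩⟩
      (hpd ⟨Sum.inl (i, Sum.inl (a + 1)), ⟨_, rfl⟩⟩)
    rcases ht with h | h <;> simp at h

end Hlemmas

lemma pdn_H (n : ℕ) (hn : 3 ≤ n) (i : Fin 2) :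
    powerDominationNumber ((twoDoubleStarsPlusTwo n).induce
      {v | ∃ w, v = Sum.inl (i, w)}) = 2 := by
  haveI : Nonempty ↥(Hset n i) := ⟨⟨Sum.inl (i, Sum.inl 0), ⟨_, rfl⟩⟩⟩
  have c0 : ↥(Hset n i) := ⟨Sum.inl (i, Sum.inl 0), ⟨_, rfl⟩⟩
  apply pdn_eq_two _ ({⟨Sum.inl (i, Sum.inl 0), ⟨_, rfl⟩⟩, ⟨Sum.inl (i, Sum.inl 1), ⟨_, rfl⟩⟩} :
      Set ↥(Hset n i))
  · refine Set.ncard_pair ?_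
    intro h
    rw [Subtype.ext_iff] at h
    simp at h
  · intro x
    obtain ⟨xval, w, rfl⟩ := x
    cases w with
    | inl a =>
      refine PDObserved.init _ ?_
      rcases fin2_cases a with rfl | rfl
      · exact Or.inl rfl
      · exact Or.inr rfl
    | inr p =>
      obtain ⟨a, j⟩ := p
      refine PDObserved.dom ⟨Sum.inl (i, Sum.inl a), ⟨_, rfl⟩⟩ _ ?_ ?_
      · rcases fin2_cases a with rfl | rfl
        · exact Or.inl rfl
        · exact Or.inr rfl
      · rw [Hg_adj, tds_adj_inl_inl, ds_adj_center]
        exact ⟨rfl, Or.inr ⟨j, rfl⟩⟩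
  · exact fun v => H_singleton_not_pd n i hn v

lemma pdn_L (n : ℕ) (i : Fin 2) :
    powerDominationNumber ((twoDoubleStarsPlusTwo n).induce
      ({v | ∃ w, v = Sum.inl (i, w)} ∪ {Sum.inr i})) = 1 := by
  apply pdn_eq_one _ (⟨Sum.inr i, Or.inr rfl⟩ :
    ↥({v : Vtds n | ∃ w, v = Sum.inl (i, w)} ∪ {Sum.inr i}))
  intro x
  rcases x.2 with ⟨w, hw⟩ | hx
  · refine Or.inr ?_
    show (twoDoubleStarsPlusTwo n).Adj (Sum.inr i) x.val
    rw [hw]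
    exact tds_adj_inr_inl i (i, w)
  · exact Or.inl (Subtype.ext hx)

lemma not_connected (n : ℕ) :
    ¬ ((twoDoubleStarsPlusTwo n).induce
      (({Sum.inr 0, Sum.inr 1} : Set (Vtds n))ᶜ)).Connected := by
  set s : Set (Vtds n) := ({Sum.inr 0, Sum.inr 1} : Set (Vtds n))ᶜ with hs
  have hinl : ∀ x : ↥s, ∃ p, x.val = Sum.inl p := by
    intro x
    rcases hx : x.val with p | j
    · exact ⟨p, rfl⟩
    · exfalso
      have := x.2
      rw [hx, hs] at this
      simp only [Set.mem_compl_iff, Set.mem_insert_iff, Set.mem_singleton_iff] at this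
      push_neg at this
      rcases fin2_cases j with rfl | rfl
      · exact this.1 rfl
      · exact this.2 rfl
  set f : ↥s → Fin 2 := fun x => Sum.elim Prod.fst (fun _ => 0) x.val with hf
  have hadj : ∀ x y : ↥s, ((twoDoubleStarsPlusTwo n).induce s).Adj x y → f x = f y := by
    intro x y h
    obtain ⟨⟨ix, wx⟩, hx⟩ := hinl x
    obtain ⟨⟨iy, wy⟩, hy⟩ := hinl y
    have : (twoDoubleStarsPlusTwo n).Adj x.val y.val := h
    rw [hx, hy, tds_adj_inl_inl] at this
    simp only [hf, hx, hy, Sum.elim_inl]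
    exact this.1
  intro hc
  have hr := hc.preconnected ⟨Sum.inl (0, Sum.inl 0), by simp [hs]⟩
    ⟨Sum.inl (1, Sum.inl 0), by simp [hs]⟩
  have key : ∀ x y : ↥s, ((twoDoubleStarsPlusTwo n).induce s).Reachable x y → f x = f y := by
    rintro x y ⟨p⟩
    induction p with
    | nil => rfl
    | cons h p ih => exact (hadj _ _ h).trans ih
  have := key _ _ hr
  simp only [hf, Sum.elim_inl] at this
  exact absurd this (by decide)

/-- There exist a graph `G`, a cut-set `C` of `G` of size `s`, components
`H_1, …, H_m` of `G − C`, and subsets `C_i ⊆ C` with induced subgraphs `L_i` on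
`V(H_i) ∪ C_i`, such that `∑ γ_P(L_i) + s < ∑ γ_P(H_i) + s`.  Specifically, for
`i ∈ [2]` let `H_i` be obtained from two disjoint copies of `K_{1,n}` (`n ≥ 3`) by
adding an edge between their centers, let `G` be obtained from `H_1 ∪ H_2` together
with two new vertices `x_1, x_2` each adjacent to every vertex of `H_1 ∪ H_2`, let
`C = {x_1, x_2}` (a cut-set of size 2), `C_i = {x_i}`, and `L_i` the subgraph induced
by `V(H_i) ∪ {x_i}`; then `γ_P(L_1) + γ_P(L_2) + 2 = 4` while
`γ_P(H_1) + γ_P(H_2) + 2 = 6`. -/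
theorem cutset_general_bound_strictly_better (n : ℕ) (hn : 3 ≤ n) :
    ¬ ((twoDoubleStarsPlusTwo n).induce
        (({Sum.inr 0, Sum.inr 1} :
          Set ((Fin 2 × (Fin 2 ⊕ (Fin 2 × Fin n))) ⊕ Fin 2))ᶜ)).Connected ∧
    ({Sum.inr 0, Sum.inr 1} :
        Set ((Fin 2 × (Fin 2 ⊕ (Fin 2 × Fin n))) ⊕ Fin 2)).ncard = 2 ∧
    (∑ i : Fin 2, powerDominationNumber ((twoDoubleStarsPlusTwo n).induce
        ({v | ∃ w, v = Sum.inl (i, w)} ∪ {Sum.inr i}))) + 2 = 4 ∧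
    (∑ i : Fin 2, powerDominationNumber ((twoDoubleStarsPlusTwo n).induce
        {v | ∃ w, v = Sum.inl (i, w)})) + 2 = 6 := by
  refine ⟨not_connected n, ?_, ?_, ?_⟩
  · exact Set.ncard_pair (by simp)
  · rw [Fin.sum_univ_two, pdn_L, pdn_L]
  · rw [Fin.sum_univ_two, pdn_H n hn, pdn_H n hn]
end
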